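/- The poset C(m,n) of good rectangular preorders on Coll(m,n), ordered by refinement and with a formal minimal element adjoined, is a lattice: any two elements have a join and a meet. -/

import Mathlib

/-- `Coll m n` is the set of collisions: vertical collisions `mᵢ` for `1 ≤ i < m`
(encoded `Sum.inl`) and horizontal collisions `lⱼ` for `1 ≤ j < n` (encoded `Sum.inr`). -/
abbrev Coll (m n : ℕ) := Fin (m - 1) ⊕ Fin (n - 1)

/-- A vertical and a horizontal collision are orthogonal. -/
def Orthogonal {m n : ℕ} : Coll m n → Coll m n → Prop
  | Sum.inl _, Sum.inr _ => True
  | Sum.inr _, Sum.inl _ => True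
  | _, _ => False

/-- Two distinct collisions of the same kind are parallel. -/
def Parallel {m n : ℕ} : Coll m n → Coll m n → Prop
  | Sum.inl i, Sum.inl j => i ≠ j
  | Sum.inr i, Sum.inr j => i ≠ j
  | _, _ => False

/-- `Between x y g`: `g` is a collision parallel to `x` and `y` whose index lies in the
interval spanned by the indices of `x` and `y`. -/
def Between {m n : ℕ} : Coll m n → Coll m n → Coll m n → Prop
  | Sum.inl i, Sum.inl j, Sum.inl s => min i j ≤ s ∧ s ≤ max i j
  | Sum.inr i, Sum.inr j, Sum.inr s => min i j ≤ s ∧ s ≤ max i j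
  | _, _, _ => False

/-- Strict comparison in a preorder `R`. -/
def StrictR {m n : ℕ} (R : Coll m n → Coll m n → Prop) (x y : Coll m n) : Prop :=
  R x y ∧ ¬ R y x

/-- `z` is an orthogonal link between the parallel collisions `x` and `y`:
`z` is orthogonal to them and `x ≤ z ≤ y` or `y ≤ z ≤ x`. -/
def IsLink {m n : ℕ} (R : Coll m n → Coll m n → Prop) (x y z : Coll m n) : Prop :=
  Orthogonal x z ∧ ((R x z ∧ R z y) ∨ (R y z ∧ R z x))

/-- `g` is a gap between the parallel collisions `x` and `y`: its index is between theirs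
and `x < g > y` strictly. -/
def IsGap {m n : ℕ} (R : Coll m n → Coll m n → Prop) (x y g : Coll m n) : Prop :=
  Between x y g ∧ StrictR R x g ∧ StrictR R y g

/-- A good rectangular preorder on `Coll m n`: a reflexive transitive relation such that
orthogonal collisions are always comparable, and parallel collisions are comparable iff
there is an orthogonal link between them or there is no gap between them. -/
structure IsGoodRect {m n : ℕ} (R : Coll m n → Coll m n → Prop) : Prop where
  refl : ∀ x, R x x
  trans : ∀ x y z, R x y → R y z → R x z
  orth : ∀ x y, Orthogonal x y → R x y ∨ R y x
  par : ∀ x y, Parallel x y →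
    ((R x y ∨ R y x) ↔ ((∃ z, IsLink R x y z) ∨ ¬ ∃ g, IsGap R x y g))

/-- `P` refines `Q`: every comparison of `P` holds in `Q`. -/
def Refines {m n : ℕ} (P Q : Coll m n → Coll m n → Prop) : Prop :=
  ∀ x y, P x y → Q x y

/-- A vertex preorder: a good rectangular preorder in which equivalence implies equality. -/
def IsVertexP {m n : ℕ} (R : Coll m n → Coll m n → Prop) : Prop :=
  IsGoodRect R ∧ ∀ x y, R x y → R y x → x = y

/-- An edge preorder: a good rectangular preorder with exactly one equivalence class of
size two (the pair `{a,b}`), all other classes being singletons. -/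
def IsEdgeP {m n : ℕ} (R : Coll m n → Coll m n → Prop) : Prop :=
  IsGoodRect R ∧ ∃ a b : Coll m n, a ≠ b ∧ R a b ∧ R b a ∧
    ∀ x y : Coll m n, x ≠ y → R x y → R y x → (x = a ∧ y = b) ∨ (x = b ∧ y = a)

/-- The poset of good rectangular preorders on `Coll m n`, ordered by refinement. -/
def GoodRect (m n : ℕ) := {R : Coll m n → Coll m n → Prop // IsGoodRect R}

noncomputable instance (m n : ℕ) : PartialOrder (GoodRect m n) :=
  Subtype.partialOrder _

section Helpers

variable {m n : ℕ}

lemma btw_nat {k : ℕ} (i j s : Fin k) :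
    (min i j ≤ s ∧ s ≤ max i j) ↔ (i.1 ≤ s.1 ∧ s.1 ≤ j.1) ∨ (j.1 ≤ s.1 ∧ s.1 ≤ i.1) := by
  rcases le_total i j with h | h
  · rw [min_eq_left h, max_eq_right h, Fin.le_def, Fin.le_def]
    have h' := Fin.le_def.mp h
    omega
  · rw [min_eq_right h, max_eq_left h, Fin.le_def, Fin.le_def]
    have h' := Fin.le_def.mp h
    omega

lemma between_self_eq {a g : Coll m n} (h : Between a a g) : g = a := by
  rcases a with i | i <;> rcases g with s | s
  · have h' := (btw_nat i i s).mp h; exact congrArg Sum.inl (Fin.ext (by omega))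
  · exact h.elim
  · exact h.elim
  · have h' := (btw_nat i i s).mp h; exact congrArg Sum.inr (Fin.ext (by omega))

lemma between_symm {a b g : Coll m n} (h : Between a b g) : Between b a g := by
  rcases a with i | i <;> rcases b with j | j <;> rcases g with s | s <;>
    first
    | exact h.elim
    | · have h' := (btw_nat _ _ _).mp h
        exact (btw_nat _ _ _).mpr (by omega)

lemma between_sub_left {a b g h : Coll m n} (h1 : Between a b g) (h2 : Between a g h) :
    Between a b h := by
  rcases a with i | i <;> rcases b with j | j <;> rcases g with s | s <;>
    rcases h with t | t <;>
    first
    | exact h1.elim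
    | exact h2.elim
    | · have k1 := (btw_nat _ _ _).mp h1
        have k2 := (btw_nat _ _ _).mp h2
        exact (btw_nat _ _ _).mpr (by omega)

lemma between_parallel_left {a b g : Coll m n} (h : Between a b g) (hg : g ≠ a) :
    Parallel a g := by
  rcases a with i | i <;> rcases b with j | j <;> rcases g with s | s <;>
    first
    | exact h.elim
    | · intro h'; exact hg (by rw [h'])

lemma between_parallel {a b g : Coll m n} (h : Between a b g) (hab : a ≠ b) :
    Parallel a b := by
  rcases a with i | i <;> rcases b with j | j <;> rcases g with s | s <;>
    first
    | exact h.elim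
    | · intro h'; exact hab (by rw [h'])

lemma between_orth {x y g z : Coll m n} (h : Between x y g) (hz : Orthogonal g z) :
    Orthogonal x z := by
  rcases x with i | i <;> rcases y with j | j <;> rcases g with s | s <;>
    rcases z with t | t <;> first | exact h.elim | exact hz.elim | trivial

lemma between_orth' {x y g z : Coll m n} (h : Between x y g) (hz : Orthogonal x z) :
    Orthogonal g z := by
  rcases x with i | i <;> rcases y with j | j <;> rcases g with s | s <;>
    rcases z with t | t <;> first | exact h.elim | exact hz.elim | trivial

lemma parallel_symm {x y : Coll m n} (h : Parallel x y) : Parallel y x := by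
  rcases x with i | i <;> rcases y with j | j <;>
    first
    | exact h.elim
    | · intro h'; exact h (by rw [h'])

lemma parallel_orth {x y z : Coll m n} (h : Parallel x y) (hz : Orthogonal y z) :
    Orthogonal x z := by
  rcases x with i | i <;> rcases y with j | j <;> rcases z with t | t <;>
    first | exact h.elim | exact hz.elim | trivial

lemma between_split {a y g : Coll m n} (h : Between a y g) (c : Coll m n) :
    Orthogonal a c ∨ Between a c g ∨ Between c y g := by
  rcases a with i | i <;> rcases y with j | j <;> rcases g with s | s <;>
    first
    | exact h.elim
    | · have h' := (btw_nat _ _ _).mp h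
        rcases c with t | t <;>
          first
          | exact Or.inl trivial
          | · by_cases hcase : (i.1 ≤ s.1 ∧ s.1 ≤ t.1) ∨ (t.1 ≤ s.1 ∧ s.1 ≤ i.1)
              · exact Or.inr (Or.inl ((btw_nat _ _ _).mpr hcase))
              · exact Or.inr (Or.inr ((btw_nat _ _ _).mpr (by omega)))

end Helpers

section LemA

variable {m n : ℕ}

/-- Key single-preorder lemma: if `P a b` for parallel `a b` with no orthogonal link,
then every `g` between `a` and `b` satisfies `P g a ∨ P g b`. -/
theorem lemA {P : Coll m n → Coll m n → Prop} (hP : IsGoodRect P) {a b g : Coll m n}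
    (hab : P a b) (hpar : Parallel a b) (hnl : ¬ ∃ z, IsLink P a b z)
    (hbet : Between a b g) : P g a ∨ P g b := by
  by_contra hc
  obtain ⟨hga, hgb⟩ := not_or.mp hc
  have hnogap : ∀ h, ¬ IsGap P a b h := by
    rcases (hP.par a b hpar).mp (Or.inl hab) with hl | hng
    · exact absurd hl hnl
    · exact fun h hh => hng ⟨h, hh⟩
  set Bad : Coll m n → Prop := fun g => Between a b g ∧ ¬ P g a ∧ ¬ P g b with hBad
  have step : ∀ g, Bad g → ∃ g', Bad g' ∧ StrictR P g g' := by
    rintro g ⟨hbg, hga, hgb⟩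
    have hgna : g ≠ a := fun h => hga (h ▸ hP.refl a)
    have hgnb : g ≠ b := fun h => hgb (h ▸ hP.refl b)
    by_cases hag : P a g
    · -- strict a g; no-gap forces ¬ P b g, so (b,g) incomparable
      have hbgc : ¬ P b g := fun hbg' => hnogap g ⟨hbg, ⟨hag, hga⟩, ⟨hbg', hgb⟩⟩
      have hpbg : Parallel b g := between_parallel_left (between_symm hbg) hgnb
      have hinc : ¬ (P b g ∨ P g b) := by rintro (h | h) <;> [exact hbgc h; exact hgb h]
      obtain ⟨h', hb', hs1, hs2⟩ : ∃ h', IsGap P b g h' := by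
        by_contra hng
        exact hinc ((hP.par b g hpbg).mpr (Or.inr (by push_neg at hng ⊢; exact hng)))
      refine ⟨h', ⟨?_, ?_, hs1.2⟩, hs2⟩
      · exact between_symm (between_sub_left (between_symm hbg) hb')
      · exact fun hh => hga (hP.trans g h' a hs2.1 hh)
    · -- (a,g) incomparable
      have hpag : Parallel a g := between_parallel_left hbg hgna
      have hinc : ¬ (P a g ∨ P g a) := by rintro (h | h) <;> [exact hag h; exact hga h]
      obtain ⟨h', hb', hs1, hs2⟩ : ∃ h', IsGap P a g h' := by
        by_contra hng
        exact hinc ((hP.par a g hpag).mpr (Or.inr (by push_neg at hng ⊢; exact hng)))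
      refine ⟨h', ⟨?_, hs1.2, ?_⟩, hs2⟩
      · exact between_sub_left hbg hb'
      · exact fun hh => hgb (hP.trans g h' b hs2.1 hh)
  -- well-founded contradiction
  have hwf : WellFounded (fun u v : Coll m n => StrictR P v u) := by
    have ht : IsTrans (Coll m n) (fun u v => StrictR P v u) := by
      constructor
      rintro u v w ⟨h1, h2⟩ ⟨h3, h4⟩
      exact ⟨hP.trans w v u h3 h1, fun h => h4 (hP.trans v u w h1 h)⟩
    have hi : IsIrrefl (Coll m n) (fun u v => StrictR P v u) := by
      constructor; rintro u ⟨h1, h2⟩; exact h2 h1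
    exact Finite.wellFounded_of_trans_of_irrefl _
  obtain ⟨g0, hg0, hmin⟩ := hwf.has_min {g | Bad g} ⟨g, hbet, hga, hgb⟩
  obtain ⟨g', hBg', hsg'⟩ := step g0 hg0
  exact hmin g' hBg' hsg'

end LemA

section Join

variable {m n : ℕ}

open Relation

/-- Path-crossing lemma: along a reflexive-transitive path from `x` to `y`, any `g`
between `x` and `y` either sees an orthogonal element on the path, or is bracketed by a
single step of the path, or the path reaches `g`'s position trivially. -/
theorem lemB {S : Coll m n → Coll m n → Prop} {x y : Coll m n}
    (hxy : ReflTransGen S x y) :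
    ∀ g, Between x y g →
      (∃ z, Orthogonal g z ∧ ReflTransGen S x z ∧ ReflTransGen S z y) ∨
      (∃ u v, S u v ∧ ReflTransGen S x u ∧ ReflTransGen S v y ∧ Between u v g) ∨
      ReflTransGen S g y := by
  induction hxy using ReflTransGen.head_induction_on with
  | refl =>
    intro g hg
    right; right
    rw [between_self_eq hg]
  | @head a c h' h ih =>
    intro g hg
    rcases between_split hg c with horth | hac | hcy
    · exact Or.inl ⟨c, between_orth' hg horth, ReflTransGen.single h', h⟩
    · exact Or.inr (Or.inl ⟨a, c, h', ReflTransGen.refl, h, hac⟩)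
    · rcases ih g hcy with ⟨z, hz1, hz2, hz3⟩ | ⟨u, v, h1, h2, h3, h4⟩ | hgy
      · exact Or.inl ⟨z, hz1, ReflTransGen.head h' hz2, hz3⟩
      · exact Or.inr (Or.inl ⟨u, v, h1, ReflTransGen.head h' h2, h3, h4⟩)
      · exact Or.inr (Or.inr hgy)

/-- Core of the forward direction of `par` for the closure. -/
theorem aux_core {S R : Coll m n → Coll m n → Prop} (hR : IsGoodRect R)
    (hsub : ∀ u v, R u v → S u v) {x y g u v : Coll m n}
    (hbet : Between x y g) (hbuv : Between u v g) (hRuv : R u v)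
    (hxu : ReflTransGen S x u) (hvy : ReflTransGen S v y)
    (hnl : ¬ ∃ z, IsLink (ReflTransGen S) x y z)
    (hgy : ¬ ReflTransGen S g y) : False := by
  by_cases huv : u = v
  · subst huv
    exact hgy ((between_self_eq hbuv) ▸ hvy)
  · have hpuv : Parallel u v := between_parallel hbuv huv
    by_cases hl : ∃ z, IsLink R u v z
    · obtain ⟨z, hzo, hzc⟩ := hl
      apply hnl
      refine ⟨z, between_orth hbet (between_orth' hbuv hzo), Or.inl ?_⟩
      rcases hzc with ⟨h1, h2⟩ | ⟨h1, h2⟩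
      · exact ⟨hxu.trans (ReflTransGen.single (hsub _ _ h1)),
          (ReflTransGen.single (hsub _ _ h2)).trans hvy⟩
      · exact ⟨(hxu.trans (ReflTransGen.single (hsub _ _ hRuv))).trans
            (ReflTransGen.single (hsub _ _ h1)),
          (ReflTransGen.single (hsub _ _ h2)).trans
            ((ReflTransGen.single (hsub _ _ hRuv)).trans hvy)⟩
    · rcases lemA hR hRuv hpuv hl hbuv with h | h
      · exact hgy (((ReflTransGen.single (hsub _ _ h)).trans
          (ReflTransGen.single (hsub _ _ hRuv))).trans hvy)
      · exact hgy ((ReflTransGen.single (hsub _ _ h)).trans hvy)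

theorem aux_forward {P Q : Coll m n → Coll m n → Prop} (hP : IsGoodRect P)
    (hQ : IsGoodRect Q) {x y : Coll m n} (hpar : Parallel x y)
    (hxy : ReflTransGen (fun u v => P u v ∨ Q u v) x y) :
    (∃ z, IsLink (ReflTransGen fun u v => P u v ∨ Q u v) x y z) ∨
      ¬ ∃ g, IsGap (ReflTransGen fun u v => P u v ∨ Q u v) x y g := by
  set T := ReflTransGen (fun u v : Coll m n => P u v ∨ Q u v) with hT
  by_cases hnl : ∃ z, IsLink T x y z
  · exact Or.inl hnl
  right
  rintro ⟨g, hbet, ⟨hxg, hgx⟩, ⟨hyg, hgy⟩⟩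
  rcases lemB hxy g hbet with ⟨z, hz, h2, h3⟩ | ⟨u, v, hS, hxu, hvy, hbuv⟩ | hgy'
  · exact hnl ⟨z, between_orth hbet hz, Or.inl ⟨h2, h3⟩⟩
  · rcases hS with hS | hS
    · exact aux_core hP (fun u v h => Or.inl h) hbet hbuv hS hxu hvy hnl hgy
    · exact aux_core hQ (fun u v h => Or.inr h) hbet hbuv hS hxu hvy hnl hgy
  · exact hgy hgy'

theorem good_join {P Q : Coll m n → Coll m n → Prop} (hP : IsGoodRect P)
    (hQ : IsGoodRect Q) :
    IsGoodRect (ReflTransGen fun u v : Coll m n => P u v ∨ Q u v) := by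
  set T := ReflTransGen (fun u v : Coll m n => P u v ∨ Q u v) with hT
  constructor
  · exact fun x => ReflTransGen.refl
  · exact fun x y z h1 h2 => h1.trans h2
  · intro x y h
    rcases hP.orth x y h with h' | h'
    · exact Or.inl (ReflTransGen.single (Or.inl h'))
    · exact Or.inr (ReflTransGen.single (Or.inl h'))
  · intro x y hpar
    constructor
    · rintro (hxy | hyx)
      · exact aux_forward hP hQ hpar hxy
      · rcases aux_forward hP hQ (parallel_symm hpar) hyx with ⟨z, hzo, hzc⟩ | hng
        · exact Or.inl ⟨z, parallel_orth hpar hzo, hzc.symm⟩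
        · refine Or.inr fun ⟨g, h1, h2, h3⟩ => hng ⟨g, between_symm h1, h3, h2⟩
    · rintro (⟨z, hzo, ⟨h1, h2⟩ | ⟨h1, h2⟩⟩ | hng)
      · exact Or.inl (h1.trans h2)
      · exact Or.inr (h1.trans h2)
      · by_contra hc
        obtain ⟨hnxy, hnyx⟩ := not_or.mp hc
        have hpinc : ¬ (P x y ∨ P y x) := by
          rintro (h | h)
          · exact hnxy (ReflTransGen.single (Or.inl h))
          · exact hnyx (ReflTransGen.single (Or.inl h))
        obtain ⟨g, hbet, ⟨h1, h2⟩, ⟨h3, h4⟩⟩ : ∃ g, IsGap P x y g := by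
          by_contra hng'
          exact hpinc ((hP.par x y hpar).mpr (Or.inr (by push_neg at hng' ⊢; exact hng')))
        refine hng ⟨g, hbet, ⟨ReflTransGen.single (Or.inl h1), fun hgx =>
          hnyx (ReflTransGen.trans (ReflTransGen.single (Or.inl h3) : T y g) hgx)⟩,
          ⟨ReflTransGen.single (Or.inl h3), fun hgy =>
          hnxy (ReflTransGen.trans (ReflTransGen.single (Or.inl h1) : T x g) hgy)⟩⟩

end Join

section Lattice

variable {m n : ℕ}

open Relation

theorem good_top : IsGoodRect (fun _ _ : Coll m n => True) := by
  refine ⟨fun _ => trivial, fun _ _ _ _ _ => trivial, fun _ _ _ => Or.inl trivial, ?_⟩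
  intro x y _
  constructor
  · intro _
    right
    rintro ⟨g, _, ⟨_, h2⟩, _⟩
    exact h2 trivial
  · intro _; exact Or.inl trivial

lemma goodRect_le_iff {P Q : GoodRect m n} : P ≤ Q ↔ ∀ x y, P.1 x y → Q.1 x y :=
  Iff.rfl

noncomputable instance : Finite (GoodRect m n) := by
  unfold GoodRect; infer_instance

/-- Join in `GoodRect`. -/
noncomputable def joinG (P Q : GoodRect m n) : GoodRect m n :=
  ⟨ReflTransGen fun u v => P.1 u v ∨ Q.1 u v, good_join P.2 Q.2⟩

lemma le_joinG_left (P Q : GoodRect m n) : P ≤ joinG P Q :=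
  fun _ _ h => ReflTransGen.single (Or.inl h)

lemma le_joinG_right (P Q : GoodRect m n) : Q ≤ joinG P Q :=
  fun _ _ h => ReflTransGen.single (Or.inr h)

lemma joinG_le {P Q U : GoodRect m n} (hPU : P ≤ U) (hQU : Q ≤ U) : joinG P Q ≤ U := by
  intro x y h
  induction h with
  | refl => exact U.2.refl x
  | tail h1 h2 ih =>
    rcases h2 with h | h
    · exact U.2.trans _ _ _ ih (hPU _ _ h)
    · exact U.2.trans _ _ _ ih (hQU _ _ h)

/-- The top element of `GoodRect`. -/
noncomputable def topG : GoodRect m n := ⟨fun _ _ => True, good_top⟩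

lemma le_topG (P : GoodRect m n) : P ≤ topG := fun _ _ _ => trivial

/-- Binary meets exist in `GoodRect` as soon as a common lower bound exists. -/
lemma exists_meetG (P Q : GoodRect m n) (hne : ∃ R : GoodRect m n, R ≤ P ∧ R ≤ Q) :
    ∃ Z : GoodRect m n, Z ≤ P ∧ Z ≤ Q ∧ ∀ R : GoodRect m n, R ≤ P → R ≤ Q → R ≤ Z := by
  obtain ⟨Z, hZL, hmax⟩ := (Set.toFinite {R : GoodRect m n | R ≤ P ∧ R ≤ Q}).exists_maximal
    (by obtain ⟨R, hR⟩ := hne; exact ⟨R, hR⟩)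
  refine ⟨Z, hZL.1, hZL.2, fun R hRP hRQ => ?_⟩
  have hJ : joinG Z R ∈ {R : GoodRect m n | R ≤ P ∧ R ≤ Q} :=
    ⟨joinG_le hZL.1 hRP, joinG_le hZL.2 hRQ⟩
  have hZJ : Z = joinG Z R := le_antisymm (le_joinG_left Z R) (hmax hJ (le_joinG_left Z R))
  exact le_trans (le_joinG_right Z R) (le_of_eq hZJ.symm)

lemma isLUB_pair_of_le {α : Type*} [PartialOrder α] {a b : α} (h : a ≤ b) :
    IsLUB {a, b} b := by
  constructor
  · rintro x (rfl | rfl)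
    · exact h
    · exact le_rfl
  · intro w hw
    exact hw (Set.mem_insert_of_mem _ rfl)

lemma isGLB_pair_of_le {α : Type*} [PartialOrder α] {a b : α} (h : a ≤ b) :
    IsGLB {a, b} a := by
  constructor
  · rintro x (rfl | rfl)
    · exact le_rfl
    · exact h
  · intro w hw
    exact hw (Set.mem_insert _ _)

lemma main_pair (P Q : GoodRect m n) :
    (∃ j : WithBot (GoodRect m n), IsLUB {(P : WithBot (GoodRect m n)), (Q : WithBot (GoodRect m n))} j) ∧
    (∃ k : WithBot (GoodRect m n), IsGLB {(P : WithBot (GoodRect m n)), (Q : WithBot (GoodRect m n))} k) := by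
  constructor
  · refine ⟨(joinG P Q : GoodRect m n), ?_, ?_⟩
    · rintro x (rfl | rfl)
      · exact WithBot.coe_le_coe.mpr (le_joinG_left P Q)
      · exact WithBot.coe_le_coe.mpr (le_joinG_right P Q)
    · intro w hw
      obtain ⟨U, rfl, hPU⟩ := WithBot.coe_le_iff.mp (hw (Set.mem_insert _ _))
      have hQU : Q ≤ U := WithBot.coe_le_coe.mp (hw (Set.mem_insert_of_mem _ rfl))
      exact WithBot.coe_le_coe.mpr (joinG_le hPU hQU)
  · by_cases hne : ∃ R : GoodRect m n, R ≤ P ∧ R ≤ Q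
    · obtain ⟨Z, hZP, hZQ, hZmax⟩ := exists_meetG P Q hne
      refine ⟨(Z : WithBot (GoodRect m n)), ?_, ?_⟩
      · rintro x (rfl | rfl)
        · exact WithBot.coe_le_coe.mpr hZP
        · exact WithBot.coe_le_coe.mpr hZQ
      · intro w hw
        induction w with
        | bot => exact bot_le
        | coe R =>
          have hRP : R ≤ P := WithBot.coe_le_coe.mp (hw (Set.mem_insert _ _))
          have hRQ : R ≤ Q := WithBot.coe_le_coe.mp (hw (Set.mem_insert_of_mem _ rfl))
          exact WithBot.coe_le_coe.mpr (hZmax R hRP hRQ)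
    · refine ⟨⊥, fun x _ => bot_le, ?_⟩
      intro w hw
      induction w with
      | bot => exact le_rfl
      | coe R =>
        exact absurd ⟨R, WithBot.coe_le_coe.mp (hw (Set.mem_insert _ _)),
          WithBot.coe_le_coe.mp (hw (Set.mem_insert_of_mem _ rfl))⟩ hne

end Lattice

/-- `C(m,n)` with a formal minimal element adjoined is a lattice: any two elements have a
join (least upper bound) and a meet (greatest lower bound). -/
theorem constrainahedron_lattice (m n : ℕ) (a b : WithBot (GoodRect m n)) :
    (∃ j : WithBot (GoodRect m n), IsLUB {a, b} j) ∧
    (∃ k : WithBot (GoodRect m n), IsGLB {a, b} k) := by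
  induction a with
  | bot =>
    exact ⟨⟨b, isLUB_pair_of_le bot_le⟩, ⟨⊥, isGLB_pair_of_le bot_le⟩⟩
  | coe P =>
    induction b with
    | bot =>
      rw [Set.pair_comm]
      exact ⟨⟨(P : WithBot (GoodRect m n)), isLUB_pair_of_le bot_le⟩,
        ⟨⊥, isGLB_pair_of_le bot_le⟩⟩
    | coe Q => exact main_pair P Q
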